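/- For every real H > 0 with H ≠ 1/√3 there exists an integer m ≥ 2 such that 2·arccot(H) < 2π/m < b₂(H), where arccot(H) = π/2 − arctan(H) and b₂(H) = √2·π·(H + √(1+H²))^{3/2} / ((1+H²)^{1/4}·(1 + 2H² + 2H√(1+H²))). -/
import Mathlib

open Real

set_option maxHeartbeats 1000000

private lemma b2_formula (H : ℝ) (hH : 0 < H) :
    Real.sqrt 2 * Real.pi * (H + Real.sqrt (1 + H ^ 2)) ^ ((3 : ℝ) / 2)
      / ((1 + H ^ 2) ^ ((1 : ℝ) / 4) * (1 + 2 * H ^ 2 + 2 * H * Real.sqrt (1 + H ^ 2)))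
    = 2 * Real.pi / Real.sqrt (2 * Real.sqrt (1 + H ^ 2) * (H + Real.sqrt (1 + H ^ 2))) := by
  set s := Real.sqrt (1 + H ^ 2) with hs
  have h1 : (0:ℝ) < 1 + H ^ 2 := by positivity
  have hs0 : 0 < s := Real.sqrt_pos.mpr h1
  have hs2 : s ^ 2 = 1 + H ^ 2 := Real.sq_sqrt h1.le
  set t := H + s with htdef
  have ht0 : 0 < t := by positivity
  have hden : 1 + 2 * H ^ 2 + 2 * H * s = t ^ 2 := by rw [htdef]; nlinarith [hs2]
  have e1 : (1 + H ^ 2) ^ ((1:ℝ)/4) = Real.sqrt s := by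
    rw [← hs2, Real.sqrt_eq_rpow, ← Real.rpow_natCast s 2, ← Real.rpow_mul hs0.le]
    norm_num
  have e2 : t ^ ((3:ℝ)/2) = t * Real.sqrt t := by
    have h32 : (3:ℝ)/2 = 1 + 1/2 := by norm_num
    rw [h32, Real.rpow_add ht0, Real.rpow_one, Real.sqrt_eq_rpow]
  rw [e1, e2, hden]
  have h3 : Real.sqrt (2 * s * t) = Real.sqrt 2 * Real.sqrt s * Real.sqrt t := by
    rw [Real.sqrt_mul (by positivity) t, Real.sqrt_mul (by norm_num) s]
  rw [h3, div_eq_div_iff (by positivity) (by positivity)]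
  have q2 : Real.sqrt 2 * Real.sqrt 2 = 2 := Real.mul_self_sqrt (by norm_num)
  have qt : Real.sqrt t * Real.sqrt t = t := Real.mul_self_sqrt ht0.le
  calc Real.sqrt 2 * Real.pi * (t * Real.sqrt t) * (Real.sqrt 2 * Real.sqrt s * Real.sqrt t)
      = (Real.sqrt 2 * Real.sqrt 2) * (Real.sqrt t * Real.sqrt t)
          * (Real.pi * t * Real.sqrt s) := by ring
    _ = 2 * t * (Real.pi * t * Real.sqrt s) := by rw [q2, qt]
    _ = 2 * Real.pi * (Real.sqrt s * t ^ 2) := by ring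

private lemma arctan_lt_self' {x : ℝ} (hx : 0 < x) : Real.arctan x < x := by
  have h0 : 0 < Real.arctan x := by
    have := Real.arctan_strictMono hx
    rwa [Real.arctan_zero] at this
  have := Real.lt_tan h0 (Real.arctan_lt_pi_div_two x)
  rwa [Real.tan_arctan] at this

/-- For every `H > 0` with `H ≠ 1/√3` there is an integer `m ≥ 2` with
`2 arccot H < 2π/m < b₂ H`, where `arccot H = π/2 − arctan H` and
`b₂ H = √2 π (H+√(1+H²))^{3/2} / ((1+H²)^{1/4}(1+2H²+2H√(1+H²)))`. -/
theorem stmt_15 (H : ℝ) (hH : 0 < H) (hne : H ≠ 1 / Real.sqrt 3) (b₂ : ℝ → ℝ)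
    (hb₂ : ∀ x : ℝ, b₂ x = Real.sqrt 2 * Real.pi
      * (x + Real.sqrt (1 + x ^ 2)) ^ ((3 : ℝ) / 2)
      / ((1 + x ^ 2) ^ ((1 : ℝ) / 4) * (1 + 2 * x ^ 2 + 2 * x * Real.sqrt (1 + x ^ 2)))) :
    ∃ m : ℕ, 2 ≤ m ∧ 2 * (Real.pi / 2 - Real.arctan H) < 2 * Real.pi / (m : ℝ)
      ∧ 2 * Real.pi / (m : ℝ) < b₂ H := by
  have h1 : (0:ℝ) < 1 + H ^ 2 := by positivity
  set s := Real.sqrt (1 + H ^ 2) with hsdef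
  have hs0 : 0 < s := Real.sqrt_pos.mpr h1
  have hs2 : s ^ 2 = 1 + H ^ 2 := Real.sq_sqrt h1.le
  set t := H + s with htdef
  have ht0 : 0 < t := by positivity
  set g := Real.sqrt (2 * s * t) with hgdef
  have hg0 : 0 < g := Real.sqrt_pos.mpr (by positivity)
  have hg2 : g ^ 2 = 2 * s * t := Real.sq_sqrt (by positivity)
  have hb : b₂ H = 2 * Real.pi / g := by rw [hb₂ H]; exact b2_formula H hH
  have hπ := Real.pi_pos
  -- a sufficient criterion
  have key : ∀ m : ℕ, 2 ≤ m → g < (m : ℝ) →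
      2 * (Real.pi / 2 - Real.arctan H) * (m : ℝ) < 2 * Real.pi →
      ∃ m : ℕ, 2 ≤ m ∧ 2 * (Real.pi / 2 - Real.arctan H) < 2 * Real.pi / (m : ℝ)
      ∧ 2 * Real.pi / (m : ℝ) < b₂ H := by
    intro m hm hgm harc
    have hm0 : (0:ℝ) < (m : ℝ) := by positivity
    refine ⟨m, hm, ?_, ?_⟩
    · rw [lt_div_iff₀ hm0]; exact harc
    · rw [hb]
      exact div_lt_div_of_pos_left (by positivity) hg0 hgm
  have harctan_pos : 0 < Real.arctan H := by
    have := Real.arctan_strictMono hH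
    rwa [Real.arctan_zero] at this
  rcases lt_trichotomy H (1 / Real.sqrt 3) with hlt | heq | hgt
  · -- case H < 1/√3 : m = 2
    have hc2 : (1 / Real.sqrt 3) ^ 2 = 1/3 := by
      rw [div_pow, one_pow, Real.sq_sqrt (by norm_num : (3:ℝ) ≥ 0)]
    have hH2 : H ^ 2 < 1/3 := by
      have := mul_self_lt_mul_self hH.le hlt
      nlinarith [this]
    -- s * t < 2
    have hst : s * t < 2 := by
      have hHs : H * s < 1 - H ^ 2 := by
        have h2 : (H * s) ^ 2 < (1 - H ^ 2) ^ 2 := by nlinarith [hs2]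
        nlinarith [mul_pos hH hs0, h2]
      rw [htdef]; nlinarith [hs2]
    have hglt : g < 2 := by
      have : g ^ 2 < 4 := by rw [hg2]; nlinarith
      nlinarith [hg0]
    refine key 2 le_rfl (by exact_mod_cast hglt) ?_
    push_cast
    nlinarith [harctan_pos]
  · exact absurd heq hne
  · -- H > 1/√3
    have hsqrt3 : (1:ℝ) < Real.sqrt 3 := by
      nlinarith [Real.sq_sqrt (by norm_num : (3:ℝ) ≥ 0), Real.sqrt_nonneg 3]
    by_cases hle1 : H ≤ 1
    · -- m = 3
      have harc6 : Real.pi / 6 < Real.arctan H := by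
        have : Real.arctan (1 / Real.sqrt 3) < Real.arctan H := Real.arctan_strictMono hgt
        rwa [← Real.tan_pi_div_six, Real.arctan_tan (by linarith) (by linarith)] at this
      have hs15 : s ≤ 3/2 := by nlinarith [hs2, hs0]
      have hglt : g < 3 := by
        have : g ^ 2 < 9 := by rw [hg2, htdef]; nlinarith
        nlinarith [hg0]
      refine key 3 (by norm_num) (by exact_mod_cast hglt) ?_
      push_cast
      nlinarith [harc6]
    · push_neg at hle1
      by_cases hle18 : H ≤ 1.8
      · -- m = 4
        have harc4 : Real.pi / 4 < Real.arctan H := by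
          have : Real.arctan 1 < Real.arctan H := Real.arctan_strictMono hle1
          rwa [Real.arctan_one] at this
        have hs206 : s ≤ 2.06 := by nlinarith [hs2, hs0]
        have hglt : g < 4 := by
          have : g ^ 2 < 16 := by rw [hg2, htdef]; nlinarith
          nlinarith [hg0]
        refine key 4 (by norm_num) (by exact_mod_cast hglt) ?_
        push_cast
        nlinarith [harc4]
      · -- general case, m = ⌊g⌋ + 1
        push_neg at hle18
        have hg1 : 1 < g := by nlinarith [hg2, hg0, hs2]
        set m : ℕ := ⌊g⌋₊ + 1 with hmdef
        have hm2 : 2 ≤ m := by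
          have : 1 ≤ ⌊g⌋₊ := Nat.le_floor (by exact_mod_cast hg1.le)
          omega
        have hgm : g < (m : ℝ) := by
          have := Nat.lt_floor_add_one g
          exact_mod_cast this
        have hmle : (m : ℝ) ≤ g + 1 := by
          have := Nat.floor_le hg0.le
          push_cast [hmdef]
          linarith
        -- g + 1 < π * H
        have hπ1 : 3.141592 < Real.pi := Real.pi_gt_d6
        have hsH : 2*H*s < 2*H^2 + 1 := by
          nlinarith [hs2, mul_pos hH hs0, mul_pos (mul_pos (by norm_num : (0:ℝ) < 2) hH) hs0]
        have hgH : g + 1 < Real.pi * H := by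
          have hgsq : g ^ 2 < 4*H^2 + 3 := by
            rw [hg2, htdef]; nlinarith [hs2, hsH]
          have hA : 0 < Real.pi * H - 1 := by nlinarith
          have hπ2 : 9.8696 < Real.pi ^ 2 := by nlinarith [hπ1]
          have hπu : Real.pi < 3.15 := by
            have := Real.pi_lt_d2
            linarith
          have k1 : 9.8696*H^2 ≤ Real.pi^2*H^2 := by nlinarith [hπ2, sq_nonneg H]
          have k2 : 2*Real.pi*H < 6.3*H := by nlinarith [hπu, hH]
          have k3 : 0 ≤ (H - 1.8) * H := mul_nonneg (by linarith) hH.le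
          have hsq : g ^ 2 < (Real.pi * H - 1) ^ 2 := by nlinarith [hgsq, k1, k2, k3]
          nlinarith [hg0, hA, hsq]
        -- arccot H < 1/H
        have harccot : Real.pi / 2 - Real.arctan H < 1 / H := by
          have := arctan_lt_self' (x := H⁻¹) (by positivity)
          rw [Real.arctan_inv_of_pos hH] at this
          rw [one_div]; linarith
        refine key m hm2 hgm ?_
        have hmπH : (m : ℝ) < Real.pi * H := lt_of_le_of_lt hmle hgH
        have hacpos : 0 < Real.pi / 2 - Real.arctan H := by
          have := Real.arctan_lt_pi_div_two H
          linarith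
        have hm0 : (0:ℝ) < (m:ℝ) := by positivity
        calc 2 * (Real.pi / 2 - Real.arctan H) * (m:ℝ)
            < 2 * (1/H) * (m:ℝ) := by
              apply mul_lt_mul_of_pos_right _ hm0
              linarith
          _ < 2 * Real.pi := by
              rw [one_div]
              have : (m:ℝ) / H < Real.pi := by
                rw [div_lt_iff₀ hH]; linarith [hmπH]
              calc 2 * H⁻¹ * (m:ℝ) = 2 * ((m:ℝ)/H) := by rw [div_eq_mul_inv]; ring
                _ < 2 * Real.pi := by linarith
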